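/- The unique solution of the variational problem VP(r₀) is a constant function if and only if 1/r₀ has the form a + b cos θ + c sin θ for real constants a, b, c (with a > 0), i.e. if and only if r₀ is the radial function of an ellipse with one focus at the origin. -/

import Mathlib

open Real Set intervalIntegral

lemma twopi_pos : (0:ℝ) < 2 * π := by positivity

lemma uIcc_eq : Set.uIcc (0:ℝ) (2*π) = Icc 0 (2*π) := uIcc_of_le twopi_pos.le

lemma zero_of_nonneg_int {F : ℝ → ℝ}
    (hc : ContinuousOn F (Icc 0 (2*π))) (h0 : ∀ t ∈ Icc (0:ℝ) (2*π), 0 ≤ F t)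
    (hint : (∫ t in (0:ℝ)..(2*π), F t) ≤ 0) :
    ∀ t ∈ Icc (0:ℝ) (2*π), F t = 0 := by
  by_contra h
  push_neg at h
  obtain ⟨t₀, ht₀, hne⟩ := h
  have hpos := intervalIntegral.integral_pos twopi_pos hc
    (fun x hx => h0 x (Ioc_subset_Icc_self hx))
    ⟨t₀, ht₀, lt_of_le_of_ne (h0 _ ht₀) (Ne.symm hne)⟩
  linarith

lemma int_cos : (∫ t in (0:ℝ)..(2*π), Real.cos t) = 0 := by
  simp [integral_cos, Real.sin_two_pi]

lemma int_sin : (∫ t in (0:ℝ)..(2*π), Real.sin t) = 0 := by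
  simp [integral_sin, Real.cos_two_pi]

lemma int_cos_sq : (∫ t in (0:ℝ)..(2*π), Real.cos t ^ 2) = π := by
  simp [integral_cos_sq, Real.sin_two_pi, Real.cos_two_pi]

lemma int_sin_sq : (∫ t in (0:ℝ)..(2*π), Real.sin t ^ 2) = π := by
  simp [integral_sin_sq, Real.sin_two_pi, Real.cos_two_pi]

lemma int_sin_cos : (∫ t in (0:ℝ)..(2*π), Real.sin t * Real.cos t) = 0 := by
  simp [integral_sin_mul_cos₁, Real.sin_two_pi]

lemma int_split3 {u v w : ℝ → ℝ} (a b c : ℝ)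
    (hu : ContinuousOn u (Icc 0 (2*π))) (hv : ContinuousOn v (Icc 0 (2*π)))
    (hw : ContinuousOn w (Icc 0 (2*π))) :
    (∫ t in (0:ℝ)..(2*π), (a * u t + b * v t + c * w t)) =
      a * (∫ t in (0:ℝ)..(2*π), u t) + b * (∫ t in (0:ℝ)..(2*π), v t) +
        c * (∫ t in (0:ℝ)..(2*π), w t) := by
  have hu' : IntervalIntegrable u MeasureTheory.volume 0 (2*π) :=
    hu.intervalIntegrable_of_Icc twopi_pos.le
  have hv' : IntervalIntegrable v MeasureTheory.volume 0 (2*π) :=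
    hv.intervalIntegrable_of_Icc twopi_pos.le
  have hw' : IntervalIntegrable w MeasureTheory.volume 0 (2*π) :=
    hw.intervalIntegrable_of_Icc twopi_pos.le
  rw [intervalIntegral.integral_add ((hu'.const_mul a).add (hv'.const_mul b)) (hw'.const_mul c),
      intervalIntegral.integral_add (hu'.const_mul a) (hv'.const_mul b),
      intervalIntegral.integral_const_mul, intervalIntegral.integral_const_mul,
      intervalIntegral.integral_const_mul]

lemma int_split4 {F u v w : ℝ → ℝ} (a b c : ℝ)
    (hF : ContinuousOn F (Icc 0 (2*π))) (hu : ContinuousOn u (Icc 0 (2*π)))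
    (hv : ContinuousOn v (Icc 0 (2*π))) (hw : ContinuousOn w (Icc 0 (2*π))) :
    (∫ t in (0:ℝ)..(2*π), (F t + (a * u t + b * v t + c * w t))) =
      (∫ t in (0:ℝ)..(2*π), F t) + (a * (∫ t in (0:ℝ)..(2*π), u t) +
        b * (∫ t in (0:ℝ)..(2*π), v t) + c * (∫ t in (0:ℝ)..(2*π), w t)) := by
  have hF' : IntervalIntegrable F MeasureTheory.volume 0 (2*π) :=
    hF.intervalIntegrable_of_Icc twopi_pos.le
  have hu' : IntervalIntegrable u MeasureTheory.volume 0 (2*π) :=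
    hu.intervalIntegrable_of_Icc twopi_pos.le
  have hv' : IntervalIntegrable v MeasureTheory.volume 0 (2*π) :=
    hv.intervalIntegrable_of_Icc twopi_pos.le
  have hw' : IntervalIntegrable w MeasureTheory.volume 0 (2*π) :=
    hw.intervalIntegrable_of_Icc twopi_pos.le
  rw [intervalIntegral.integral_add hF'
      (((hu'.const_mul a).add (hv'.const_mul b)).add (hw'.const_mul c)),
    int_split3 a b c hu hv hw]

lemma pos_of_abs_le_half {x : ℝ} (h : |x| ≤ 1/2) : 0 < 1 + x := by
  have h1 := (abs_le.mp h).1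
  linarith

lemma rpow_lb {x : ℝ} (hx : |x| ≤ 1/2) :
    1 + (2/3)*x - x^2 ≤ (1+x) ^ ((2:ℝ)/3) := by
  rw [abs_le] at hx
  have hb : (0:ℝ) < 1 + x := by linarith [hx.1]
  have hy0 : 0 < 1 + (2/3)*x - x^2 := by nlinarith [hx.1, hx.2]
  have hcube : (1 + (2/3)*x - x^2)^3 ≤ (1+x)^2 := by
    nlinarith [hx.1, hx.2, sq_nonneg x, sq_nonneg (x*(1+x)), sq_nonneg (x^2),
      sq_nonneg (x^3), sq_nonneg (x^2*(1-2*x)), sq_nonneg (x^2*(1+2*x))]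
  have h1 : (1+x) ^ ((2:ℝ)/3) = ((1+x)^2) ^ ((1:ℝ)/3) := by
    rw [← Real.rpow_natCast (1+x) 2, ← Real.rpow_mul hb.le]; norm_num
  have h2 : 1 + (2/3)*x - x^2 = ((1 + (2/3)*x - x^2)^3) ^ ((1:ℝ)/3) := by
    rw [← Real.rpow_natCast _ 3, ← Real.rpow_mul hy0.le]; norm_num
  rw [h1, h2]
  exact Real.rpow_le_rpow (by positivity) hcube (by norm_num)

/-- A feasible solution of the variational problem `VP(r₀)`. -/
def Feasible (s : ℝ → ℝ) : Prop :=
  ContinuousOn s (Icc 0 (2 * π)) ∧ (∀ t ∈ Icc (0 : ℝ) (2 * π), 0 < s t) ∧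
  (1 / 2) * (∫ t in (0 : ℝ)..(2 * π), s t ^ 2) = 1 ∧
  (∫ t in (0 : ℝ)..(2 * π), s t ^ 3 * Real.cos t) = 0 ∧
  (∫ t in (0 : ℝ)..(2 * π), s t ^ 3 * Real.sin t) = 0

/-- The starshaped set whose radial function is `r`. -/
def StarSet (r : ℝ → ℝ) : Set (ℝ × ℝ) :=
  {p | ∃ t ∈ Icc (0 : ℝ) (2 * π), ∃ ρ : ℝ, 0 ≤ ρ ∧ ρ ≤ r t ∧
    p = (ρ * Real.cos t, ρ * Real.sin t)}

set_option maxHeartbeats 4000000 in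
theorem stmt14 (r₀ : ℝ → ℝ)
    (hr₀c : ContinuousOn r₀ (Icc 0 (2 * π))) (hr₀pos : ∀ t ∈ Icc (0 : ℝ) (2 * π), 0 < r₀ t)
    (hper : r₀ 0 = r₀ (2 * π)) (hconv : Convex ℝ (StarSet r₀))
    (r : ℝ → ℝ) (hfeas : Feasible r)
    (hmin : ∀ s : ℝ → ℝ, Feasible s →
      (∫ t in (0 : ℝ)..(2 * π), r t ^ 3 / r₀ t) ≤ ∫ t in (0 : ℝ)..(2 * π), s t ^ 3 / r₀ t) :
    (∃ k : ℝ, ∀ t ∈ Icc (0 : ℝ) (2 * π), r t = k) ↔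
    (∃ a b c : ℝ, 0 < a ∧ ∀ t ∈ Icc (0 : ℝ) (2 * π),
      1 / r₀ t = a + b * Real.cos t + c * Real.sin t) := by
  obtain ⟨hrc, hrpos, hr2, hrcos, hrsin⟩ := hfeas
  have hπ := Real.pi_pos
  have hle := twopi_pos.le
  have hcosc : ContinuousOn Real.cos (Icc 0 (2*π)) := Real.continuous_cos.continuousOn
  have hsinc : ContinuousOn Real.sin (Icc 0 (2*π)) := Real.continuous_sin.continuousOn
  have honec : ContinuousOn (fun _ : ℝ => (1:ℝ)) (Icc 0 (2*π)) := continuousOn_const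
  have hint1 : (∫ t in (0:ℝ)..(2*π), (1:ℝ)) = 2*π := by simp
  have hI2 : (∫ t in (0:ℝ)..(2*π), r t ^ 2) = 2 := by linarith
  constructor
  · rintro ⟨k, hk⟩
    have h0mem : (0:ℝ) ∈ Icc (0:ℝ) (2*π) := ⟨le_refl 0, hle⟩
    have hkpos : 0 < k := by
      have := hrpos 0 h0mem; rwa [hk 0 h0mem] at this
    have hπk2 : π * k^2 = 1 := by
      have h1 : (∫ t in (0:ℝ)..(2*π), r t ^ 2) = ∫ t in (0:ℝ)..(2*π), k ^ 2 := by
        apply intervalIntegral.integral_congr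
        intro t ht; rw [uIcc_eq] at ht
        show r t ^ 2 = k ^ 2
        rw [hk t ht]
      have h2 : (∫ t in (0:ℝ)..(2*π), k ^ 2) = 2*π*k^2 := by
        rw [intervalIntegral.integral_const, smul_eq_mul]; ring
      rw [h1, h2] at hI2
      linear_combination hI2/2
    -- the function f = 1/r₀ and its Fourier data
    set f : ℝ → ℝ := fun t => (r₀ t)⁻¹ with hfdef
    have hfc : ContinuousOn f (Icc 0 (2*π)) := hr₀c.inv₀ (fun t ht => (hr₀pos t ht).ne')
    have hfpos : ∀ t ∈ Icc (0:ℝ) (2*π), 0 < f t := fun t ht => inv_pos.mpr (hr₀pos t ht)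
    obtain ⟨A, hAdef⟩ : ∃ A : ℝ, A = ∫ t in (0:ℝ)..(2*π), f t := ⟨_, rfl⟩
    have hApos : 0 < A := by
      rw [hAdef]
      exact intervalIntegral.integral_pos twopi_pos hfc
        (fun x hx => (hfpos x (Ioc_subset_Icc_self hx)).le) ⟨0, h0mem, hfpos 0 h0mem⟩
    obtain ⟨a, hadef⟩ : ∃ a : ℝ, a = A/(2*π) := ⟨_, rfl⟩
    obtain ⟨b, hbdef⟩ : ∃ b : ℝ, b = (∫ t in (0:ℝ)..(2*π), f t * Real.cos t)/π := ⟨_, rfl⟩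
    obtain ⟨cc, hccdef⟩ : ∃ cc : ℝ, cc = (∫ t in (0:ℝ)..(2*π), f t * Real.sin t)/π := ⟨_, rfl⟩
    set g : ℝ → ℝ := fun t => f t - a - b*Real.cos t - cc*Real.sin t with hgdef
    have hgc : ContinuousOn g (Icc 0 (2*π)) :=
      ((hfc.sub continuousOn_const).sub (continuousOn_const.mul hcosc)).sub
        (continuousOn_const.mul hsinc)
    have hcos2c : ContinuousOn (fun t => Real.cos t ^ 2) (Icc 0 (2*π)) := hcosc.pow 2
    have hsin2c : ContinuousOn (fun t => Real.sin t ^ 2) (Icc 0 (2*π)) := hsinc.pow 2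
    have hscc : ContinuousOn (fun t => Real.sin t * Real.cos t) (Icc 0 (2*π)) := hsinc.mul hcosc
    have hgcosc : ContinuousOn (fun t => g t * Real.cos t) (Icc 0 (2*π)) := hgc.mul hcosc
    have hgsinc : ContinuousOn (fun t => g t * Real.sin t) (Icc 0 (2*π)) := hgc.mul hsinc
    have hg2c : ContinuousOn (fun t => g t ^ 2) (Icc 0 (2*π)) := hgc.pow 2
    have hgfc : ContinuousOn (fun t => g t * f t) (Icc 0 (2*π)) := hgc.mul hfc
    -- orthogonality relations
    have hg1 : (∫ t in (0:ℝ)..(2*π), g t) = 0 := by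
      have h1 : (∫ t in (0:ℝ)..(2*π), g t) =
          (∫ t in (0:ℝ)..(2*π), f t) + ((-a) * (∫ t in (0:ℝ)..(2*π), (1:ℝ)) +
            (-b) * (∫ t in (0:ℝ)..(2*π), Real.cos t) +
            (-cc) * (∫ t in (0:ℝ)..(2*π), Real.sin t)) := by
        rw [← int_split4 (-a) (-b) (-cc) hfc honec hcosc hsinc]
        apply intervalIntegral.integral_congr
        intro t _
        show g t = f t + ((-a) * 1 + (-b) * Real.cos t + (-cc) * Real.sin t)
        simp only [hgdef]; ring
      rw [h1, hint1, int_cos, int_sin, ← hAdef, hadef]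
      field_simp
      ring
    have hgcos : (∫ t in (0:ℝ)..(2*π), g t * Real.cos t) = 0 := by
      have h1 : (∫ t in (0:ℝ)..(2*π), g t * Real.cos t) =
          (∫ t in (0:ℝ)..(2*π), f t * Real.cos t) +
            ((-a) * (∫ t in (0:ℝ)..(2*π), Real.cos t) +
            (-b) * (∫ t in (0:ℝ)..(2*π), Real.cos t ^ 2) +
            (-cc) * (∫ t in (0:ℝ)..(2*π), Real.sin t * Real.cos t)) := by
        rw [← int_split4 (F := fun t => f t * Real.cos t) (-a) (-b) (-cc) (hfc.mul hcosc) hcosc hcos2c hscc]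
        apply intervalIntegral.integral_congr
        intro t _
        show g t * Real.cos t = f t * Real.cos t +
          ((-a) * Real.cos t + (-b) * Real.cos t ^ 2 + (-cc) * (Real.sin t * Real.cos t))
        simp only [hgdef]; ring
      rw [h1, int_cos, int_cos_sq, int_sin_cos, hbdef]
      field_simp
      ring
    have hgsin : (∫ t in (0:ℝ)..(2*π), g t * Real.sin t) = 0 := by
      have h1 : (∫ t in (0:ℝ)..(2*π), g t * Real.sin t) =
          (∫ t in (0:ℝ)..(2*π), f t * Real.sin t) +
            ((-a) * (∫ t in (0:ℝ)..(2*π), Real.sin t) +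
            (-b) * (∫ t in (0:ℝ)..(2*π), Real.sin t * Real.cos t) +
            (-cc) * (∫ t in (0:ℝ)..(2*π), Real.sin t ^ 2)) := by
        rw [← int_split4 (F := fun t => f t * Real.sin t) (-a) (-b) (-cc) (hfc.mul hsinc) hsinc hscc hsin2c]
        apply intervalIntegral.integral_congr
        intro t _
        show g t * Real.sin t = f t * Real.sin t +
          ((-a) * Real.sin t + (-b) * (Real.sin t * Real.cos t) + (-cc) * Real.sin t ^ 2)
        simp only [hgdef]; ring
      rw [h1, int_sin, int_sin_cos, int_sin_sq, hccdef]
      field_simp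
      ring
    obtain ⟨B, hBdef⟩ : ∃ B : ℝ, B = ∫ t in (0:ℝ)..(2*π), g t ^ 2 := ⟨_, rfl⟩
    have hB0 : 0 ≤ B := by
      rw [hBdef]
      exact intervalIntegral.integral_nonneg hle (fun t _ => sq_nonneg (g t))
    have hgf : (∫ t in (0:ℝ)..(2*π), g t * f t) = B := by
      have h1 : (∫ t in (0:ℝ)..(2*π), g t * f t) =
          (∫ t in (0:ℝ)..(2*π), g t ^ 2) +
            (a * (∫ t in (0:ℝ)..(2*π), g t) +
            b * (∫ t in (0:ℝ)..(2*π), g t * Real.cos t) +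
            cc * (∫ t in (0:ℝ)..(2*π), g t * Real.sin t)) := by
        rw [← int_split4 a b cc hg2c hgc hgcosc hgsinc]
        apply intervalIntegral.integral_congr
        intro t _
        show g t * f t = g t ^ 2 +
          (a * g t + b * (g t * Real.cos t) + cc * (g t * Real.sin t))
        simp only [hgdef]; ring
      rw [h1, hg1, hgcos, hgsin, ← hBdef]; ring
    -- main claim : B = 0
    have hBle : B ≤ 0 := by
      by_contra hBc
      push_neg at hBc
      obtain ⟨M, hM⟩ :=
        (isCompact_Icc : IsCompact (Icc (0:ℝ) (2*π))).exists_bound_of_continuousOn hgc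
      have hM0 : 0 ≤ M := le_trans (norm_nonneg _) (hM 0 h0mem)
      obtain ⟨K, hKdef⟩ : ∃ K : ℝ, K = 12*π^2*A^2 + A^2*B^2 + 8*π^3*B := ⟨_, rfl⟩
      have hKpos : 0 < K := by
        have e1 : (0:ℝ) ≤ 12*π^2*A^2 := by positivity
        have e2 : (0:ℝ) ≤ A^2*B^2 := by positivity
        have e3 : (0:ℝ) < 8*π^3*B := mul_pos (by positivity) hBc
        rw [hKdef]; linarith only [e1, e2, e3]
      obtain ⟨δ, hδdef⟩ : ∃ δ : ℝ,
          δ = min (min (1/(2*(M+1))) 1) (min (8*π^3*A/K) (π/(B+1))) := ⟨_, rfl⟩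
      have hδpos : 0 < δ := by
        rw [hδdef]
        apply lt_min (lt_min (div_pos one_pos (by linarith)) one_pos)
          (lt_min (div_pos (by positivity) hKpos) (div_pos hπ (by linarith)))
      have hδ1 : δ ≤ 1 := by
        rw [hδdef]; exact le_trans (min_le_left _ _) (min_le_right _ _)
      have hδM : δ ≤ 1/(2*(M+1)) := by
        rw [hδdef]; exact le_trans (min_le_left _ _) (min_le_left _ _)
      have hδK : δ * K ≤ 8*π^3*A := by
        have h1 : δ ≤ 8*π^3*A/K := by
          rw [hδdef]; exact le_trans (min_le_right _ _) (min_le_left _ _)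
        exact (le_div_iff₀ hKpos).mp h1
      have hδB : δ * (B+1) ≤ π := by
        have h1 : δ ≤ π/(B+1) := by
          rw [hδdef]; exact le_trans (min_le_right _ _) (min_le_right _ _)
        exact (le_div_iff₀ (by linarith)).mp h1
      -- the perturbation
      have hsmall : ∀ t ∈ Icc (0:ℝ) (2*π), |(-δ) * g t| ≤ 1/2 := by
        intro t ht
        rw [abs_mul, abs_neg, abs_of_pos hδpos]
        have h1 : |g t| ≤ M := by rw [← Real.norm_eq_abs]; exact hM t ht
        calc δ * |g t| ≤ (1/(2*(M+1))) * M :=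
              mul_le_mul hδM h1 (abs_nonneg _) (by positivity)
          _ ≤ 1/2 := by
              rw [div_mul_eq_mul_div, div_le_div_iff₀ (by linarith) (by norm_num)]
              linarith only [hM0]
      have hbase : ∀ t ∈ Icc (0:ℝ) (2*π), (0:ℝ) < 1 + (-δ) * g t :=
        fun t ht => pos_of_abs_le_half (hsmall t ht)
      obtain ⟨I, hIdef⟩ : ∃ I : ℝ,
          I = ∫ t in (0:ℝ)..(2*π), (1 + (-δ) * g t) ^ ((2:ℝ)/3) := ⟨_, rfl⟩
      have hIc : ContinuousOn (fun t => (1 + (-δ) * g t) ^ ((2:ℝ)/3)) (Icc 0 (2*π)) :=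
        (continuousOn_const.add (continuousOn_const.mul hgc)).rpow_const
          (fun t _ => Or.inr (by norm_num))
      have hIpos : 0 < I := by
        rw [hIdef]
        exact intervalIntegral.integral_pos twopi_pos hIc
          (fun x hx => (Real.rpow_pos_of_pos (hbase x (Ioc_subset_Icc_self hx)) _).le)
          ⟨0, h0mem, Real.rpow_pos_of_pos (hbase 0 h0mem) _⟩
      have hIlb : 2*π - δ^2*B ≤ I := by
        have hlhsc : ContinuousOn
            (fun t => 1 * 1 + (-(2/3)*δ) * g t + (-δ^2) * g t ^ 2) (Icc 0 (2*π)) :=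
          (continuousOn_const.add (continuousOn_const.mul hgc)).add
            (continuousOn_const.mul hg2c)
        have hmono :
            (∫ t in (0:ℝ)..(2*π), (1 * 1 + (-(2/3)*δ) * g t + (-δ^2) * g t ^ 2)) ≤ I := by
          rw [hIdef]
          apply intervalIntegral.integral_mono_on hle
            (hlhsc.intervalIntegrable_of_Icc hle) (hIc.intervalIntegrable_of_Icc hle)
          intro t ht
          calc 1 * 1 + (-(2/3)*δ) * g t + (-δ^2) * g t ^ 2
              = 1 + (2/3)*((-δ) * g t) - ((-δ) * g t)^2 := by ring
            _ ≤ (1 + (-δ) * g t) ^ ((2:ℝ)/3) := rpow_lb (hsmall t ht)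
        have hval : (∫ t in (0:ℝ)..(2*π), (1 * 1 + (-(2/3)*δ) * g t + (-δ^2) * g t ^ 2))
            = 2*π - δ^2*B := by
          rw [int_split3 1 (-(2/3)*δ) (-δ^2) honec hgc hg2c, hint1, hg1, ← hBdef]; ring
        linarith only [hmono, hval]
      have h2πB : 0 < 2*π - δ^2*B := by
        have e1 : 0 ≤ (1-δ)*(δ*B) :=
          mul_nonneg (by linarith) (mul_nonneg hδpos.le hBc.le)
        linarith only [e1, hδB, hδpos, hπ]
      -- the perturbed feasible function
      obtain ⟨c₀, hc0def⟩ : ∃ c₀ : ℝ, c₀ = Real.sqrt (2/I) := ⟨_, rfl⟩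
      have hc0pos : 0 < c₀ := by
        rw [hc0def]; exact Real.sqrt_pos.mpr (div_pos two_pos hIpos)
      have hc0sq : c₀^2 = 2/I := by
        rw [hc0def]; exact Real.sq_sqrt (div_pos two_pos hIpos).le
      set s : ℝ → ℝ := fun t => c₀ * (1 + (-δ) * g t) ^ ((1:ℝ)/3) with hsdef
      have hsc : ContinuousOn s (Icc 0 (2*π)) :=
        continuousOn_const.mul
          ((continuousOn_const.add (continuousOn_const.mul hgc)).rpow_const
            (fun t _ => Or.inr (by norm_num)))
      have hs2 : ∀ t ∈ Icc (0:ℝ) (2*π), s t ^ 2 = (2/I) * (1 + (-δ) * g t) ^ ((2:ℝ)/3) := by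
        intro t ht
        have hb := hbase t ht
        show (c₀ * (1 + (-δ) * g t) ^ ((1:ℝ)/3)) ^ 2 = (2/I) * (1 + (-δ) * g t) ^ ((2:ℝ)/3)
        rw [mul_pow, ← Real.rpow_natCast ((1 + (-δ) * g t) ^ ((1:ℝ)/3)) 2,
          ← Real.rpow_mul hb.le, hc0sq]
        norm_num
      have hs3 : ∀ t ∈ Icc (0:ℝ) (2*π), s t ^ 3 = c₀^3 * (1 + (-δ) * g t) := by
        intro t ht
        have hb := hbase t ht
        show (c₀ * (1 + (-δ) * g t) ^ ((1:ℝ)/3)) ^ 3 = c₀^3 * (1 + (-δ) * g t)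
        rw [mul_pow, ← Real.rpow_natCast ((1 + (-δ) * g t) ^ ((1:ℝ)/3)) 3,
          ← Real.rpow_mul hb.le]
        norm_num
      have hsfeas : Feasible s := by
        refine ⟨hsc, fun t ht => mul_pos hc0pos (Real.rpow_pos_of_pos (hbase t ht) _), ?_, ?_, ?_⟩
        · have h1 : (∫ t in (0:ℝ)..(2*π), s t ^ 2) =
              ∫ t in (0:ℝ)..(2*π), (2/I) * (1 + (-δ) * g t) ^ ((2:ℝ)/3) := by
            apply intervalIntegral.integral_congr
            intro t ht; rw [uIcc_eq] at ht
            exact hs2 t ht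
          rw [h1, intervalIntegral.integral_const_mul, ← hIdef]
          field_simp
        · have h1 : (∫ t in (0:ℝ)..(2*π), s t ^ 3 * Real.cos t) =
              ∫ t in (0:ℝ)..(2*π), ((c₀^3) * Real.cos t + (-δ*c₀^3) * (g t * Real.cos t)
                + 0 * Real.sin t) := by
            apply intervalIntegral.integral_congr
            intro t ht; rw [uIcc_eq] at ht
            show s t ^ 3 * Real.cos t = (c₀^3) * Real.cos t
              + (-δ*c₀^3) * (g t * Real.cos t) + 0 * Real.sin t
            rw [hs3 t ht]; ring
          rw [h1, int_split3 (c₀^3) (-δ*c₀^3) 0 hcosc hgcosc hsinc, int_cos, hgcos]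
          ring
        · have h1 : (∫ t in (0:ℝ)..(2*π), s t ^ 3 * Real.sin t) =
              ∫ t in (0:ℝ)..(2*π), ((c₀^3) * Real.sin t + (-δ*c₀^3) * (g t * Real.sin t)
                + 0 * Real.cos t) := by
            apply intervalIntegral.integral_congr
            intro t ht; rw [uIcc_eq] at ht
            show s t ^ 3 * Real.sin t = (c₀^3) * Real.sin t
              + (-δ*c₀^3) * (g t * Real.sin t) + 0 * Real.cos t
            rw [hs3 t ht]; ring
          rw [h1, int_split3 (c₀^3) (-δ*c₀^3) 0 hsinc hgsinc hcosc, int_sin, hgsin]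
          ring
      -- the two objective values
      have hobjr : (∫ t in (0:ℝ)..(2*π), r t ^ 3 / r₀ t) = k^3 * A := by
        have h1 : (∫ t in (0:ℝ)..(2*π), r t ^ 3 / r₀ t) =
            ∫ t in (0:ℝ)..(2*π), k^3 * f t := by
          apply intervalIntegral.integral_congr
          intro t ht; rw [uIcc_eq] at ht
          show r t ^ 3 / r₀ t = k ^ 3 * f t
          rw [hk t ht, div_eq_mul_inv]
        rw [h1, intervalIntegral.integral_const_mul, ← hAdef]
      have hobjs : (∫ t in (0:ℝ)..(2*π), s t ^ 3 / r₀ t) = c₀^3 * (A - δ*B) := by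
        have h1 : (∫ t in (0:ℝ)..(2*π), s t ^ 3 / r₀ t) =
            ∫ t in (0:ℝ)..(2*π), ((c₀^3) * f t + (-δ*c₀^3) * (g t * f t) + 0 * (1:ℝ)) := by
          apply intervalIntegral.integral_congr
          intro t ht; rw [uIcc_eq] at ht
          show s t ^ 3 / r₀ t = (c₀^3) * f t + (-δ*c₀^3) * (g t * f t) + 0 * (1:ℝ)
          have h2 : s t ^ 3 / r₀ t = s t ^ 3 * f t := by rw [div_eq_mul_inv]
          rw [h2, hs3 t ht]; ring
        rw [h1, int_split3 (c₀^3) (-δ*c₀^3) 0 hfc hgfc honec, ← hAdef, hgf]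
        ring
      have hminS := hmin s hsfeas
      rw [hobjr, hobjs] at hminS
      -- derive the contradiction
      have hc03 : 0 < c₀^3 := pow_pos hc0pos 3
      rcases le_or_gt (A - δ*B) 0 with hAd | hAd
      · have h1 : c₀^3 * (A - δ*B) ≤ 0 := mul_nonpos_of_nonneg_of_nonpos hc03.le hAd
        have h2 : 0 < k^3 * A := mul_pos (pow_pos hkpos 3) hApos
        linarith only [h1, h2, hminS]
      · have hsq : (k^3*A)^2 ≤ (c₀^3*(A - δ*B))^2 :=
          pow_le_pow_left₀ (mul_pos (pow_pos hkpos 3) hApos).le hminS 2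
        have hc06 : (c₀^3)^2 = 8/I^3 := by
          have h1 : (c₀^3)^2 = (c₀^2)^3 := by ring
          rw [h1, hc0sq, div_pow]
          norm_num
        have hk6 : π^3*(k^3)^2 = 1 := by
          linear_combination (π^2*k^4 + π*k^2 + 1) * hπk2
        have hmain : A^2 * I^3 ≤ 8*π^3*(A - δ*B)^2 := by
          rw [mul_pow (c₀^3) (A - δ*B) 2, hc06] at hsq
          have h8 : (8/I^3)*(A-δ*B)^2*(π^3*I^3) = 8*π^3*(A-δ*B)^2 := by
            field_simp
          have step := mul_le_mul_of_nonneg_right hsq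
            (le_of_lt (mul_pos (pow_pos hπ 3) (pow_pos hIpos 3)))
          rw [h8] at step
          calc A^2*I^3 = (π^3*(k^3)^2) * (A^2*I^3) := by rw [hk6]; ring
            _ = (k^3*A)^2*(π^3*I^3) := by ring
            _ ≤ 8*π^3*(A-δ*B)^2 := step
        have hIc3 : (2*π - δ^2*B)^3 ≤ I^3 := pow_le_pow_left₀ h2πB.le hIlb 3
        have hfin : A^2*(2*π - δ^2*B)^3 ≤ 8*π^3*(A-δ*B)^2 := by
          have h1 : A^2*(2*π - δ^2*B)^3 ≤ A^2*I^3 :=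
            mul_le_mul_of_nonneg_left hIc3 (sq_nonneg A)
          linarith only [h1, hmain]
        have step1 : 16*π^3*A*(δ*B) ≤
            12*π^2*A^2*(δ^2*B) + A^2*(δ^2*B)^3 + 8*π^3*(δ*B)^2 := by
          nlinarith only [hfin, mul_nonneg (mul_nonneg hπ.le (sq_nonneg A)) (sq_nonneg (δ^2*B))]
        have hδB' : 0 < δ*B := mul_pos hδpos hBc
        have hdiv : 16*π^3*A ≤ 12*π^2*A^2*δ + A^2*δ^5*B^2 + 8*π^3*(δ*B) := by
          rw [← mul_le_mul_iff_left₀ hδB']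
          linarith only [step1]
        have hδ5 : δ^5 ≤ δ := by
          calc δ^5 ≤ δ^1 := pow_le_pow_of_le_one hδpos.le hδ1 (by norm_num)
            _ = δ := pow_one δ
        have h2 : A^2*δ^5*B^2 ≤ A^2*δ*B^2 := by
          have h21 := mul_le_mul_of_nonneg_right hδ5 (sq_nonneg (A*B))
          linarith only [h21]
        have h3 : 16*π^3*A ≤ δ*K := by
          rw [hKdef]
          linarith only [hdiv, h2]
        have h4 : 0 < π^3*A := mul_pos (pow_pos hπ 3) hApos
        linarith only [h3, hδK, h4]
    -- B = 0, conclude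
    have hg0 : ∀ t ∈ Icc (0:ℝ) (2*π), g t = 0 := by
      intro t ht
      have h1 := zero_of_nonneg_int hg2c (fun t _ => sq_nonneg (g t))
        (by rw [← hBdef]; exact hBle) t ht
      exact sq_eq_zero_iff.mp h1
    refine ⟨a, b, cc, hadef ▸ div_pos hApos twopi_pos, fun t ht => ?_⟩
    have h1 := hg0 t ht
    have h2 : f t - a - b*Real.cos t - cc*Real.sin t = 0 := by
      rw [hgdef] at h1; exact h1
    rw [one_div]
    show f t = a + b * Real.cos t + cc * Real.sin t
    linarith only [h2]
  · rintro ⟨a, b, c, ha, hf⟩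
    set k₀ : ℝ := (Real.sqrt π)⁻¹ with hk₀
    have hk₀pos : 0 < k₀ := by positivity
    have hk₀sq : k₀^2 = π⁻¹ := by rw [hk₀, inv_pow, Real.sq_sqrt hπ.le]
    have hπk : π * k₀^2 = 1 := by rw [hk₀sq]; field_simp
    have hconstfeas : Feasible (fun _ => k₀) := by
      refine ⟨continuousOn_const, fun t _ => hk₀pos, ?_, ?_, ?_⟩
      · rw [intervalIntegral.integral_const]
        simp only [smul_eq_mul, sub_zero]
        nlinarith [hπk]
      · simp only
        rw [intervalIntegral.integral_const_mul, int_cos, mul_zero]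
      · simp only
        rw [intervalIntegral.integral_const_mul, int_sin, mul_zero]
    have hmin' := hmin _ hconstfeas
    have hr3c : ContinuousOn (fun t => r t ^ 3) (Icc 0 (2*π)) := hrc.pow 3
    have hLHS : (∫ t in (0:ℝ)..(2*π), r t ^ 3 / r₀ t) =
        a * (∫ t in (0:ℝ)..(2*π), r t ^ 3) + b * (∫ t in (0:ℝ)..(2*π), r t ^ 3 * Real.cos t) +
          c * (∫ t in (0:ℝ)..(2*π), r t ^ 3 * Real.sin t) := by
      rw [← int_split3 (v := fun t => r t ^ 3 * Real.cos t) (w := fun t => r t ^ 3 * Real.sin t) a b c hr3c (hr3c.mul hcosc) (hr3c.mul hsinc)]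
      apply intervalIntegral.integral_congr
      intro t ht
      rw [uIcc_eq] at ht
      have h1 := hf t ht
      show r t ^ 3 / r₀ t = a * r t ^ 3 + b * (r t ^ 3 * Real.cos t) + c * (r t ^ 3 * Real.sin t)
      have h2 : r t ^ 3 / r₀ t = r t ^3 * (1 / r₀ t) := by ring
      rw [h2, h1]; ring
    have hRHS : (∫ t in (0:ℝ)..(2*π), (fun _ => k₀) t ^ 3 / r₀ t) = a * (2*π*k₀^3) := by
      have : (∫ t in (0:ℝ)..(2*π), (fun _ => k₀) t ^ 3 / r₀ t) =
          (a*k₀^3) * (∫ t in (0:ℝ)..(2*π), (1:ℝ)) + (b*k₀^3) * (∫ t in (0:ℝ)..(2*π), Real.cos t)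
            + (c*k₀^3) * (∫ t in (0:ℝ)..(2*π), Real.sin t) := by
        rw [← int_split3 (a*k₀^3) (b*k₀^3) (c*k₀^3) honec hcosc hsinc]
        apply intervalIntegral.integral_congr
        intro t ht
        rw [uIcc_eq] at ht
        have h1 := hf t ht
        show k₀ ^ 3 / r₀ t = a*k₀^3 * 1 + b*k₀^3 * Real.cos t + c*k₀^3 * Real.sin t
        have h2 : k₀ ^ 3 / r₀ t = k₀ ^3 * (1 / r₀ t) := by ring
        rw [h2, h1]; ring
      rw [this, hint1, int_cos, int_sin]; ring
    rw [hLHS, hRHS, hrcos, hrsin] at hmin'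
    have hI3 : (∫ t in (0:ℝ)..(2*π), r t ^ 3) ≤ 2*π*k₀^3 := by
      exact le_of_mul_le_mul_left (by linarith [hmin']) ha
    have key := zero_of_nonneg_int (F := fun t => r t ^3 - (3/2)*k₀*(r t)^2 + k₀^3/2)
      (by fun_prop) ?nonneg ?intle
    case nonneg =>
      intro t ht
      nlinarith [sq_nonneg (r t - k₀), hrpos t ht, hk₀pos]
    case intle =>
      have hsplit : (∫ t in (0:ℝ)..(2*π), (r t ^3 - (3/2)*k₀*(r t)^2 + k₀^3/2)) =
          1 * (∫ t in (0:ℝ)..(2*π), r t ^ 3) + (-(3/2)*k₀) * (∫ t in (0:ℝ)..(2*π), r t ^ 2)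
            + (k₀^3/2) * (∫ t in (0:ℝ)..(2*π), (1:ℝ)) := by
        rw [← int_split3 (v := fun t => r t ^ 2) 1 (-(3/2)*k₀) (k₀^3/2) hr3c (hrc.pow 2) honec]
        apply intervalIntegral.integral_congr
        intro t _; ring
      rw [hsplit, hI2, hint1]
      have hk₀cube : π * k₀^3 = k₀ := by nlinarith [hπk]
      nlinarith [hI3]
    refine ⟨k₀, fun t ht => ?_⟩
    have h := key t ht
    have hrt := hrpos t ht
    have hfac : (r t - k₀)^2 * (r t + k₀/2) = 0 := by linear_combination h
    rcases mul_eq_zero.mp hfac with h1 | h2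
    · have := sq_eq_zero_iff.mp h1
      linarith [this]
    · linarith [hk₀pos, hrt]
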